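/- For z ∈ ℂⁿ \ {0} (n ≥ 2) and tangent vector X ∈ ℂⁿ, the quantity g(z,X) = (1 + v(|z|²)/|z|²)|X|² + (u²(|z|²) − v(|z|²)/|z|⁴)|⟨X,z⟩|² satisfies g(z,X) ≥ |X|², with equality only when X = 0; in particular g(z,·) is a positive definite Hermitian form for each z. -/

import Mathlib

open Real MeasureTheory Filter Set
open Topology

/-- u(t) = (t-1)/(t·log t) with the removable singularity u(1) = 1. -/
noncomputable def u (t : ℝ) : ℝ := if t = 1 then 1 else (t - 1) / (t * Real.log t)

/-- v(t) = ∫₀ᵗ τ·u(τ)² dτ. -/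
noncomputable def v (t : ℝ) : ℝ := ∫ τ in Set.Ioo (0:ℝ) t, τ * u τ ^ 2

/-- The Grauert metric g(z, X) on ℂⁿ \ {0}.  Here ⟨X, z⟩ = ∑ Xⱼ conj zⱼ equals the
Mathlib inner product ⟪z, X⟫. -/
noncomputable def g {n : ℕ} (z X : EuclideanSpace ℂ (Fin n)) : ℝ :=
  (1 + v (‖z‖ ^ 2) / ‖z‖ ^ 2) * ‖X‖ ^ 2 +
    (u (‖z‖ ^ 2) ^ 2 - v (‖z‖ ^ 2) / ‖z‖ ^ 4) * ‖(inner ℂ z X : ℂ)‖ ^ 2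

lemma u_ne_zero {t : ℝ} (ht : 0 < t) : u t ≠ 0 := by
  unfold u
  rcases eq_or_ne t 1 with h | h
  · simp [h]
  · rw [if_neg h]
    exact div_ne_zero (sub_ne_zero.2 h)
      (mul_ne_zero ht.ne' (Real.log_ne_zero_of_pos_of_ne_one ht h))

lemma u_measurable : Measurable u := by
  unfold u
  exact Measurable.ite (measurableSet_singleton 1) measurable_const
    ((measurable_id.sub measurable_const).div (measurable_id.mul Real.measurable_log))

lemma f_measurable : Measurable (fun τ : ℝ => τ * u τ ^ 2) :=
  measurable_id.mul (u_measurable.pow measurable_const)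

/-- The auxiliary function 1/(τ log²τ) is integrable near 0. -/
lemma integrable_aux : IntegrableOn (fun τ : ℝ => τ⁻¹ / Real.log τ ^ 2)
    (Set.Ioc 0 (1/2:ℝ)) := by
  apply intervalIntegral.integrableOn_deriv_of_nonneg
    (g := fun τ : ℝ => -(Real.log τ)⁻¹)
  · intro x hx
    rcases hx.1.eq_or_lt with rfl | h0
    · -- continuity at 0
      have h : Tendsto (fun τ : ℝ => -(Real.log τ)⁻¹) (𝓝[>] (0:ℝ)) (𝓝 0) := by
        have hneg : Tendsto (fun τ : ℝ => -Real.log τ) (𝓝[>] (0:ℝ)) atTop :=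
          tendsto_neg_atBot_atTop.comp Real.tendsto_log_nhdsGT_zero
        have h2 := hneg.inv_tendsto_atTop
        have heq : (fun τ : ℝ => -Real.log τ)⁻¹ = fun τ : ℝ => -(Real.log τ)⁻¹ := by
          funext τ
          simp [Pi.inv_apply, inv_neg]
        rwa [heq] at h2
      rw [ContinuousWithinAt]
      have hval : -(Real.log (0:ℝ))⁻¹ = 0 := by simp
      rw [hval]
      have hIcc : Set.Icc (0:ℝ) (1/2) ⊆ insert 0 (Set.Ioi 0) := by
        intro y hy
        rcases hy.1.eq_or_lt with h | h
        · exact Or.inl h.symm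
        · exact Or.inr h
      refine Tendsto.mono_left ?_ (nhdsWithin_mono _ hIcc)
      rw [nhdsWithin_insert, tendsto_sup]
      refine ⟨?_, h⟩
      have := tendsto_pure_nhds (fun τ : ℝ => -(Real.log τ)⁻¹) 0
      rwa [hval] at this
    · have hlog : Real.log x ≠ 0 :=
        Real.log_ne_zero_of_pos_of_ne_one h0
          (by intro h1; rw [h1] at hx; norm_num at hx)
      exact (((Real.continuousAt_log h0.ne').inv₀ hlog).neg).continuousWithinAt
  · intro x hx
    have hx0 : x ≠ 0 := hx.1.ne'
    have hlog : Real.log x ≠ 0 :=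
      Real.log_ne_zero_of_pos_of_ne_one hx.1
        (by intro h; rw [h] at hx; norm_num at hx)
    have := ((Real.hasDerivAt_log hx0).inv hlog).neg
    rw [neg_div, neg_neg] at this
    exact this
  · intro x hx
    have := hx.1
    positivity

lemma f_eq {τ : ℝ} (hτ : 0 < τ) (hne : τ ≠ 1) :
    τ * u τ ^ 2 = (τ - 1) ^ 2 * (τ⁻¹ / Real.log τ ^ 2) := by
  have hlog : Real.log τ ≠ 0 := Real.log_ne_zero_of_pos_of_ne_one hτ hne
  rw [u, if_neg hne]
  field_simp

lemma f_le_aux {τ : ℝ} (h0 : 0 < τ) (h1 : τ < 1) :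
    τ * u τ ^ 2 ≤ τ⁻¹ / Real.log τ ^ 2 := by
  rw [f_eq h0 h1.ne]
  have hB : (0:ℝ) ≤ τ⁻¹ / Real.log τ ^ 2 := by positivity
  have hsq : (τ - 1) ^ 2 ≤ 1 := by nlinarith
  calc (τ - 1) ^ 2 * (τ⁻¹ / Real.log τ ^ 2)
      ≤ 1 * (τ⁻¹ / Real.log τ ^ 2) := mul_le_mul_of_nonneg_right hsq hB
    _ = τ⁻¹ / Real.log τ ^ 2 := one_mul _

lemma f_le_linear {τ : ℝ} (h : (1:ℝ)/2 ≤ τ) : τ * u τ ^ 2 ≤ τ + 2 := by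
  have h0 : (0:ℝ) < τ := by linarith
  rcases eq_or_ne τ 1 with rfl | hne
  · norm_num [u]
  have hlog : Real.log τ ≠ 0 := Real.log_ne_zero_of_pos_of_ne_one h0 hne
  rw [f_eq h0 hne]
  rcases lt_or_gt_of_ne hne with hlt | hgt
  · -- 1/2 ≤ τ < 1
    have hub : Real.log τ ≤ τ - 1 := Real.log_le_sub_one_of_pos h0
    have hsq : (τ - 1) ^ 2 ≤ Real.log τ ^ 2 := by nlinarith
    have key : (τ - 1) ^ 2 * (τ⁻¹ / Real.log τ ^ 2) ≤ τ⁻¹ := by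
      rw [mul_div_assoc']
      rw [div_le_iff₀ (by positivity)]
      have : (0:ℝ) ≤ τ⁻¹ := by positivity
      nlinarith
    have : τ⁻¹ ≤ 2 := by
      rw [inv_le_comm₀ (by positivity) (by norm_num)]
      linarith
    linarith
  · -- τ > 1
    have hub : Real.log τ⁻¹ ≤ τ⁻¹ - 1 := Real.log_le_sub_one_of_pos (by positivity)
    rw [Real.log_inv] at hub
    have hlb : 1 - τ⁻¹ ≤ Real.log τ := by linarith
    have hpos : (0:ℝ) < 1 - τ⁻¹ := by
      have : τ⁻¹ < 1 := by
        rw [inv_lt_one₀ h0]; exact hgt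
      linarith
    have hsq : (1 - τ⁻¹) ^ 2 ≤ Real.log τ ^ 2 := by nlinarith
    have key : (τ - 1) ^ 2 * (τ⁻¹ / Real.log τ ^ 2) ≤ τ := by
      rw [mul_div_assoc']
      rw [div_le_iff₀ (by positivity)]
      have h1 : (τ - 1) ^ 2 * τ⁻¹ ≤ τ * (1 - τ⁻¹) ^ 2 := by
        have : (τ - 1) ^ 2 * τ⁻¹ = τ * (1 - τ⁻¹) ^ 2 := by
          field_simp
        linarith [this.le]
      calc (τ - 1) ^ 2 * τ⁻¹ = τ * (1 - τ⁻¹) ^ 2 := by field_simp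
        _ ≤ τ * Real.log τ ^ 2 := by nlinarith
    linarith
  
lemma integrableOn_f (T : ℝ) :
    IntegrableOn (fun τ : ℝ => τ * u τ ^ 2) (Set.Ioo 0 T) := by
  set M := max T 1 with hM
  have hM1 : (1:ℝ) ≤ M := le_max_right _ _
  have h1 : IntegrableOn (fun τ : ℝ => τ * u τ ^ 2) (Set.Ioc 0 (1/2:ℝ)) := by
    refine Integrable.mono integrable_aux
      (f_measurable.aestronglyMeasurable.restrict) ?_
    filter_upwards [ae_restrict_mem measurableSet_Ioc] with τ hτ
    have h0 : 0 < τ := hτ.1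
    have h1 : τ < 1 := lt_of_le_of_lt hτ.2 (by norm_num)
    rw [Real.norm_of_nonneg (by positivity), Real.norm_of_nonneg (by positivity)]
    exact f_le_aux h0 h1
  have h2 : IntegrableOn (fun τ : ℝ => τ * u τ ^ 2) (Set.Ioc (1/2:ℝ) M) := by
    have hc : IntegrableOn (fun _ : ℝ => M + 2) (Set.Ioc (1/2:ℝ) M) :=
      integrableOn_const measure_Ioc_lt_top.ne
    refine Integrable.mono hc (f_measurable.aestronglyMeasurable.restrict) ?_
    filter_upwards [ae_restrict_mem measurableSet_Ioc] with τ hτ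
    have h0 : 0 < τ := lt_of_lt_of_le (by norm_num) hτ.1.le
    rw [Real.norm_of_nonneg (by positivity),
      Real.norm_of_nonneg (by linarith)]
    calc τ * u τ ^ 2 ≤ τ + 2 := f_le_linear hτ.1.le
      _ ≤ M + 2 := by linarith [hτ.2]
  refine (h1.union h2).mono_set ?_
  intro x hx
  rcases le_or_gt x (1/2) with h | h
  · exact Or.inl ⟨hx.1, h⟩
  · exact Or.inr ⟨h, le_max_of_le_left hx.2.le⟩

lemma v_pos {T : ℝ} (hT : 0 < T) : 0 < v T := by
  rw [v, setIntegral_pos_iff_support_of_nonneg_ae]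
  · refine lt_of_lt_of_le ?_ (measure_mono (?_ :
      Set.Ioo 0 T ⊆ Function.support (fun τ : ℝ => τ * u τ ^ 2) ∩ Set.Ioo 0 T))
    · simp [Real.volume_Ioo, ENNReal.ofReal_pos, hT]
    · intro τ hτ
      refine ⟨?_, hτ⟩
      have hu : u τ ≠ 0 := u_ne_zero hτ.1
      exact mul_ne_zero hτ.1.ne' (pow_ne_zero _ hu)
  · filter_upwards [ae_restrict_mem measurableSet_Ioo] with τ hτ
    have := hτ.1
    positivity
  · exact integrableOn_f T

theorem g_pos_def {n : ℕ} (hn : 2 ≤ n) (z X : EuclideanSpace ℂ (Fin n)) (hz : z ≠ 0) :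
    ‖X‖ ^ 2 ≤ g z X ∧ (g z X = ‖X‖ ^ 2 → X = 0) := by
  have hz' : 0 < ‖z‖ := norm_pos_iff.mpr hz
  have ht : 0 < ‖z‖ ^ 2 := by positivity
  set t := ‖z‖ ^ 2 with htdef
  set a := ‖X‖ ^ 2 with hadef
  set b := ‖(inner ℂ z X : ℂ)‖ ^ 2 with hbdef
  have ha : 0 ≤ a := by positivity
  have hb : 0 ≤ b := by positivity
  have hCS : b ≤ t * a := by
    have := norm_inner_le_norm (𝕜 := ℂ) z X
    rw [hbdef, htdef, hadef]
    nlinarith [norm_nonneg (inner ℂ z X : ℂ), norm_nonneg z, norm_nonneg X]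
  have hv : 0 < v t := v_pos ht
  have hu : u t ≠ 0 := u_ne_zero ht
  have hu2 : 0 < u t ^ 2 := by positivity
  have hg : g z X = a + u t ^ 2 * b + v t / t ^ 2 * (t * a - b) := by
    rw [g]
    have h4 : ‖z‖ ^ 4 = t ^ 2 := by rw [htdef]; ring
    rw [h4, ← htdef, ← hadef, ← hbdef]
    field_simp
    ring
  have key1 : 0 ≤ u t ^ 2 * b := by positivity
  have key2 : 0 ≤ v t / t ^ 2 * (t * a - b) :=
    mul_nonneg (by positivity) (by linarith)
  constructor
  · rw [hg]; linarith
  · intro heq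
    rw [hg] at heq
    have hsum : u t ^ 2 * b + v t / t ^ 2 * (t * a - b) = 0 := by linarith
    have hb0 : b = 0 := by
      by_contra hb0
      have : 0 < u t ^ 2 * b := mul_pos hu2 (lt_of_le_of_ne hb (Ne.symm hb0))
      linarith
    have hvt : 0 < v t / t ^ 2 := by positivity
    have ha0 : a = 0 := by
      by_contra ha0
      have ha' : 0 < a := lt_of_le_of_ne ha (Ne.symm ha0)
      have : 0 < v t / t ^ 2 * (t * a - b) := by
        apply mul_pos hvt
        rw [hb0]
        simpa using mul_pos ht ha'
      nlinarith
    have : ‖X‖ = 0 := by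
      rw [hadef] at ha0
      nlinarith [norm_nonneg X]
    exact norm_eq_zero.mp this
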